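/- If G is a finite group in which every subgroup is either equal to G or abelian, and G itself is non-abelian, then the order of G has at most two prime divisors. -/

import Mathlib

open Subgroup

section Aux

variable {G : Type*} [Group G]

/-- If `K` is an abelian subgroup, the set of elements of `K` of order prime to `q`
forms a subgroup. -/
def MM.primeCompl (K : Subgroup G) (hab : ∀ a b : K, a * b = b * a) (q : ℕ)
    (hq : q.Prime) : Subgroup G where
  carrier := {g | g ∈ K ∧ ¬ q ∣ orderOf g}
  one_mem' := ⟨K.one_mem, by simp only [orderOf_one, Nat.dvd_one]; exact hq.one_lt.ne'⟩
  mul_mem' := by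
    rintro a b ⟨haK, haq⟩ ⟨hbK, hbq⟩
    refine ⟨K.mul_mem haK hbK, fun hdvd => ?_⟩
    have hcomm : Commute a b := by
      have := hab ⟨a, haK⟩ ⟨b, hbK⟩
      exact Subtype.ext_iff.mp this
    have h1 : orderOf (a * b) ∣ Nat.lcm (orderOf a) (orderOf b) :=
      hcomm.orderOf_mul_dvd_lcm
    have h2 : q ∣ orderOf a * orderOf b :=
      (hdvd.trans h1).trans (Nat.lcm_dvd_mul _ _)
    rcases (Nat.Prime.dvd_mul hq).mp h2 with h | h
    · exact haq h
    · exact hbq h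
  inv_mem' := by
    rintro a ⟨haK, haq⟩
    exact ⟨K.inv_mem haK, by rwa [orderOf_inv]⟩

theorem MM.primeCompl_normal (K : Subgroup G) (hab : ∀ a b : K, a * b = b * a) (q : ℕ)
    (hq : q.Prime) (hK : K.Normal) : (MM.primeCompl K hab q hq).Normal := by
  constructor
  rintro n ⟨hnK, hnq⟩ g
  refine ⟨hK.conj_mem n hnK g, ?_⟩
  have : SemiconjBy g n (g * n * g⁻¹) := by
    unfold SemiconjBy; group
  rwa [← this.orderOf_eq]

theorem MM.card_sup_dvd [Finite G] (A N : Subgroup G) [hN : N.Normal] :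
    Nat.card ↥(A ⊔ N) ∣ Nat.card A * Nat.card N := by
  have h1 : (N.subgroupOf (A ⊔ N)).index * Nat.card ↥(N.subgroupOf (A ⊔ N)) =
      Nat.card ↥(A ⊔ N) := Subgroup.index_mul_card _
  have h2 : Nat.card ↥(N.subgroupOf (A ⊔ N)) = Nat.card N :=
    Nat.card_congr (subgroupOfEquivOfLe le_sup_right).toEquiv
  have h3 : N.relIndex (A ⊔ N) = N.relIndex A := relIndex_sup_right A N
  have h4 : N.relIndex A ∣ Nat.card A := Subgroup.index_dvd_card _
  have h5 : (N.subgroupOf (A ⊔ N)).index = N.relIndex A := h3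
  rw [← h1, h2, h5]
  exact Nat.mul_dvd_mul h4 dvd_rfl

/-- In a finite group whose order is divisible by a prime `q ≠ p`, no `p`-subgroup is
the whole group. -/
theorem MM.pgroup_ne_top [Fintype G] {p q : ℕ} (hp : p.Prime) (hq : q.Prime)
    {P : Subgroup G} (hP : IsPGroup p ↥P) (hqd : q ∣ Fintype.card G) (hne : q ≠ p) :
    P ≠ ⊤ := by
  intro htop
  haveI := Fact.mk hq
  obtain ⟨g, hg⟩ := exists_prime_orderOf_dvd_card q hqd
  obtain ⟨k, hk⟩ := hP ⟨g, htop ▸ mem_top g⟩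
  have hk' : g ^ p ^ k = 1 := by
    have := congrArg (Subtype.val) hk
    simpa using this
  have hdvd : orderOf g ∣ p ^ k := orderOf_dvd_of_pow_eq_one hk'
  rw [hg] at hdvd
  exact hne ((Nat.prime_dvd_prime_iff_eq hq hp).mp (hq.dvd_of_dvd_pow hdvd))

end Aux

theorem miller_moreno_prime_divisors (G : Type*) [Group G] [Fintype G]
    (hsub : ∀ H : Subgroup G, H = ⊤ ∨ ∀ a b : H, a * b = b * a)
    (hna : ¬ ∀ a b : G, a * b = b * a) :
    (Fintype.card G).primeFactors.card ≤ 2 := by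
  by_contra hcard
  push_neg at hcard
  have hNatCard : Nat.card G = Fintype.card G := Nat.card_eq_fintype_card
  by_cases hall : ∀ (p : ℕ), p.Prime → ∀ (P : Sylow p G), (P : Subgroup G).Normal
  · -- all Sylow subgroups normal: G is a product of its (abelian) Sylows, so abelian
    apply hna
    let e := Sylow.directProductOfNormal (G := G) (fun {p} hp P => hall p hp.out P)
    intro a b
    obtain ⟨x, rfl⟩ := e.surjective a
    obtain ⟨y, rfl⟩ := e.surjective b
    rw [← map_mul, ← map_mul]
    congr 1
    funext p
    funext P
    have hp : (p : ℕ).Prime := Nat.prime_of_mem_primeFactors p.2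
    -- find another prime q dividing |G|
    have h2 : 1 ≤ ((Fintype.card G).primeFactors.erase p).card := by
      have := Finset.pred_card_le_card_erase (s := (Fintype.card G).primeFactors) (a := (p : ℕ))
      omega
    have h3 : 0 < ((Fintype.card G).primeFactors.erase (p : ℕ)).card := by omega
    obtain ⟨q, hq⟩ := Finset.card_pos.mp h3
    have hq' : q.Prime := Nat.prime_of_mem_primeFactors (Finset.mem_of_mem_erase hq)
    have hqd : q ∣ Fintype.card G :=
      Nat.dvd_of_mem_primeFactors (Finset.mem_of_mem_erase hq)
    have hqp : q ≠ (p : ℕ) := Finset.ne_of_mem_erase hq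
    have hPne : (P : Subgroup G) ≠ ⊤ := MM.pgroup_ne_top hp hq' P.isPGroup' hqd hqp
    have habP := (hsub (P : Subgroup G)).resolve_left hPne
    simp only [Pi.mul_apply]
    exact habP _ _
  · push_neg at hall
    obtain ⟨p, hp, P, hPn⟩ := hall
    haveI := Fact.mk hp
    have hnt : normalizer ((P : Subgroup G) : Set G) ≠ ⊤ := fun h => hPn (normalizer_eq_top_iff.mp h)
    have habN := (hsub (normalizer ((P : Subgroup G) : Set G))).resolve_left hnt
    have hP : normalizer ((P : Subgroup G) : Set G) ≤ centralizer (P : Set G) := by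
      intro g hg
      rw [mem_centralizer_iff]
      intro h hh
      exact Subtype.ext_iff.mp (habN ⟨h, le_normalizer hh⟩ ⟨g, hg⟩)
    set K := (MonoidHom.transferSylow P hP).ker with hKdef
    have hC : Subgroup.IsComplement' K (P : Subgroup G) :=
      MonoidHom.ker_transferSylow_isComplement' P hP
    have hsupKP : K ⊔ (P : Subgroup G) = ⊤ := hC.sup_eq_top
    -- choose two primes q ≠ r, both different from p, dividing |G|
    have h2 : 1 < ((Fintype.card G).primeFactors.erase p).card := by
      have := Finset.pred_card_le_card_erase (s := (Fintype.card G).primeFactors) (a := p)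
      omega
    obtain ⟨q, hq, r, hr, hqr⟩ := Finset.one_lt_card.mp h2
    have hq' : q.Prime := Nat.prime_of_mem_primeFactors (Finset.mem_of_mem_erase hq)
    have hqd : q ∣ Fintype.card G :=
      Nat.dvd_of_mem_primeFactors (Finset.mem_of_mem_erase hq)
    have hqp : q ≠ p := Finset.ne_of_mem_erase hq
    have hr' : r.Prime := Nat.prime_of_mem_primeFactors (Finset.mem_of_mem_erase hr)
    have hrd : r ∣ Fintype.card G :=
      Nat.dvd_of_mem_primeFactors (Finset.mem_of_mem_erase hr)
    have hrp : r ≠ p := Finset.ne_of_mem_erase hr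
    -- K is a proper subgroup, hence abelian
    have hKne : K ≠ ⊤ := by
      intro hKt
      have hcc : Nat.card K * Nat.card (P : Subgroup G) = Nat.card G := hC.card_mul_card
      rw [hKt, Subgroup.card_top] at hcc
      have hGpos : 0 < Nat.card G := Nat.card_pos
      have hP1 : Nat.card (P : Subgroup G) = 1 := by
        have : Nat.card G * Nat.card (P : Subgroup G) = Nat.card G * 1 := by
          rw [mul_one]; exact hcc
        exact Nat.eq_of_mul_eq_mul_left hGpos this
      have hPbot : (P : Subgroup G) = ⊥ := Subgroup.card_eq_one.mp hP1
      exact hPn (hPbot ▸ inferInstance)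
    have habK := (hsub K).resolve_left hKne
    have hPne : (P : Subgroup G) ≠ ⊤ := MM.pgroup_ne_top hp hq' P.isPGroup' hqd hqp
    have habP := (hsub (P : Subgroup G)).resolve_left hPne
    -- the q'- and r'- parts of K
    set Q' := MM.primeCompl K habK q hq' with hQ'def
    set R' := MM.primeCompl K habK r hr' with hR'def
    haveI hQn : Q'.Normal := MM.primeCompl_normal K habK q hq' inferInstance
    haveI hRn : R'.Normal := MM.primeCompl_normal K habK r hr' inferInstance
    -- elements of P commute with elements of the s'-part, for s ∈ {q, r}
    have key_part : ∀ (s : ℕ) (hs : s.Prime), s ∣ Fintype.card G → s ≠ p →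
        ∀ (S : Subgroup G), S.Normal → (∀ g ∈ S, ¬ s ∣ orderOf g) →
        ∀ y ∈ (P : Subgroup G), ∀ z ∈ S, Commute y z := by
      intro s hs hsd hsp S hSn hSord y hy z hz
      haveI := hSn
      have h1 : Nat.card ↥(zpowers y ⊔ S) ∣ Nat.card (zpowers y) * Nat.card S :=
        MM.card_sup_dvd _ _
      have hy_ord : ¬ s ∣ Nat.card (zpowers y) := by
        rw [Nat.card_zpowers]
        intro hdvd
        obtain ⟨k, hk⟩ := P.isPGroup' ⟨y, hy⟩
        have hk' : y ^ p ^ k = 1 := by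
          have := congrArg (Subtype.val) hk
          simpa using this
        have h2 : orderOf y ∣ p ^ k := orderOf_dvd_of_pow_eq_one hk'
        exact hsp ((Nat.prime_dvd_prime_iff_eq hs hp).mp (hs.dvd_of_dvd_pow (hdvd.trans h2)))
      have hS_ord : ¬ s ∣ Nat.card S := by
        intro hdvd
        haveI := Fact.mk hs
        obtain ⟨g, hg⟩ := exists_prime_orderOf_dvd_card' (G := ↥S) s (by simpa using hdvd)
        have : orderOf (g : G) = s := by rw [Subgroup.orderOf_coe, hg]
        exact hSord (g : G) g.2 (this ▸ dvd_rfl)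
      have hHne : zpowers y ⊔ S ≠ ⊤ := by
        intro htop
        have : Nat.card ↥(zpowers y ⊔ S) = Nat.card G := by rw [htop, Subgroup.card_top]
        rw [this, hNatCard] at h1
        have : s ∣ Nat.card (zpowers y) * Nat.card S := hsd.trans h1
        rcases (Nat.Prime.dvd_mul hs).mp this with h | h
        · exact hy_ord h
        · exact hS_ord h
      have habH := (hsub (zpowers y ⊔ S)).resolve_left hHne
      have hyH : y ∈ zpowers y ⊔ S := Subgroup.mem_sup_left (mem_zpowers y)
      have hzH : z ∈ zpowers y ⊔ S := Subgroup.mem_sup_right hz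
      exact Subtype.ext_iff.mp (habH ⟨y, hyH⟩ ⟨z, hzH⟩)
    -- every element of P commutes with every element of K
    have key : ∀ y ∈ (P : Subgroup G), ∀ k ∈ K, Commute y k := by
      intro y hy k hk
      set n := orderOf k with hn
      have hn0 : n ≠ 0 := (orderOf_pos k).ne'
      set ee := n.factorization q with hee
      have hqe_dvd : q ^ ee ∣ n := Nat.ordProj_dvd n q
      set m := n / q ^ ee with hm
      have hm_dvd : m ∣ n := Nat.ordCompl_dvd n q
      -- k₁ = k ^ (q ^ ee) has order m, prime to q
      have hord1 : orderOf (k ^ q ^ ee) = m := by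
        rw [orderOf_pow, ← hn, Nat.gcd_eq_right hqe_dvd]
      have hk1Q : k ^ q ^ ee ∈ Q' := by
        refine ⟨K.pow_mem hk _, ?_⟩
        rw [hord1]
        exact Nat.not_dvd_ordCompl hq' hn0
      -- k₂ = k ^ m has order q ^ ee, prime to r
      have hord2 : orderOf (k ^ m) = q ^ ee := by
        rw [orderOf_pow, ← hn, Nat.gcd_eq_right hm_dvd, hm, Nat.div_div_self hqe_dvd hn0]
      have hk2R : k ^ m ∈ R' := by
        refine ⟨K.pow_mem hk _, ?_⟩
        rw [hord2]
        intro hdvd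
        exact hqr ((Nat.prime_dvd_prime_iff_eq hr' hq').mp (hr'.dvd_of_dvd_pow hdvd)).symm
      have hc1 : Commute y (k ^ q ^ ee) :=
        key_part q hq' hqd hqp Q' hQn (fun g hg => hg.2) y hy _ hk1Q
      have hc2 : Commute y (k ^ m) :=
        key_part r hr' hrd hrp R' hRn (fun g hg => hg.2) y hy _ hk2R
      -- Bézout: k is a product of integer powers of k₁ and k₂
      have hcop : Nat.Coprime (q ^ ee) m := (Nat.coprime_ordCompl hq' hn0).pow_left _
      have hbez : (1 : ℤ) = (q ^ ee : ℕ) * Nat.gcdA (q ^ ee) m + (m : ℕ) * Nat.gcdB (q ^ ee) m := by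
        have := Nat.gcd_eq_gcd_ab (q ^ ee) m
        rwa [hcop, Nat.cast_one] at this
      have hkeq : k = (k ^ q ^ ee) ^ Nat.gcdA (q ^ ee) m * (k ^ m) ^ Nat.gcdB (q ^ ee) m := by
        rw [← zpow_natCast k (q ^ ee), ← zpow_natCast k m, ← zpow_mul, ← zpow_mul, ← zpow_add,
          ← hbez, zpow_one]
      rw [hkeq]
      exact (hc1.zpow_right _).mul_right (hc2.zpow_right _)
    -- conclude: both K and P are central, so G is abelian
    have hKcent : K ≤ centralizer (K : Set G) := by
      intro x hx
      rw [mem_centralizer_iff]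
      intro h hh
      exact Subtype.ext_iff.mp (habK ⟨h, hh⟩ ⟨x, hx⟩)
    have hPcentK : (P : Subgroup G) ≤ centralizer (K : Set G) := by
      intro y hy
      rw [mem_centralizer_iff]
      intro h hh
      exact (key y hy h hh).symm
    have hcentK : centralizer (K : Set G) = ⊤ :=
      top_le_iff.mp (hsupKP ▸ sup_le hKcent hPcentK)
    have hKcentP : K ≤ centralizer ((P : Subgroup G) : Set G) := by
      intro x hx
      rw [mem_centralizer_iff]
      intro h hh
      exact key h hh x hx
    have hPcentP : (P : Subgroup G) ≤ centralizer ((P : Subgroup G) : Set G) := by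
      intro y hy
      rw [mem_centralizer_iff]
      intro h hh
      exact Subtype.ext_iff.mp (habP ⟨h, hh⟩ ⟨y, hy⟩)
    have hcentP : centralizer ((P : Subgroup G) : Set G) = ⊤ :=
      top_le_iff.mp (hsupKP ▸ sup_le hKcentP hPcentP)
    have hKZ : K ≤ center G := by
      intro k hk
      rw [mem_center_iff]
      intro g
      exact ((mem_centralizer_iff.mp (hcentK ▸ mem_top g)) k hk).symm
    have hPZ : (P : Subgroup G) ≤ center G := by
      intro y hy
      rw [mem_center_iff]
      intro g
      exact ((mem_centralizer_iff.mp (hcentP ▸ mem_top g)) y hy).symm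
    have hZ : center G = ⊤ := top_le_iff.mp (hsupKP ▸ sup_le hKZ hPZ)
    apply hna
    intro a b
    have ha : a ∈ center G := hZ ▸ mem_top a
    exact (mem_center_iff.mp ha b).symm
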